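/- Let (x_i)_{i=1}^v and (a_i)_{i=1}^v be (weakly) increasing sequences of positive integers with (x_i) ≠ (a_i), such that for every 0 ≤ k ≤ v−1, Π_{i=1}^{k+1} a_i ≤ Π_{i=1}^{k+1} x_i. Then Σ_{i=1}^v 1/x_i < Σ_{i=1}^v 1/a_i. -/

import Mathlib

theorem stmt_16 (v : ℕ) (hv : 1 ≤ v) (x a : ℕ → ℕ)
    (hxpos : ∀ i < v, 0 < x i) (hapos : ∀ i < v, 0 < a i)
    (hxmono : ∀ i j, i ≤ j → j < v → x i ≤ x j)
    (hamono : ∀ i j, i ≤ j → j < v → a i ≤ a j)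
    (hne : ∃ i < v, x i ≠ a i)
    (hprod : ∀ k < v, ∏ i ∈ Finset.range (k+1), a i ≤ ∏ i ∈ Finset.range (k+1), x i) :
    ∑ i ∈ Finset.range v, (1:ℝ)/(x i) < ∑ i ∈ Finset.range v, (1:ℝ)/(a i) := by
  obtain ⟨m, hm, hmne⟩ := hne
  set L : ℕ → ℝ := fun i => Real.log (x i) - Real.log (a i) with hLdef
  have hxR : ∀ i < v, (0:ℝ) < x i := fun i hi => by exact_mod_cast hxpos i hi
  have haR : ∀ i < v, (0:ℝ) < a i := fun i hi => by exact_mod_cast hapos i hi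
  -- pointwise weak inequality
  have key : ∀ i < v, (1/(x i:ℝ)) * L i ≤ 1/(a i:ℝ) - 1/(x i:ℝ) := by
    intro i hi
    have hx := hxR i hi; have ha := haR i hi
    have h1 : Real.log ((x i : ℝ)/(a i)) ≤ (x i:ℝ)/(a i) - 1 :=
      Real.log_le_sub_one_of_pos (div_pos hx ha)
    rw [Real.log_div (ne_of_gt hx) (ne_of_gt ha)] at h1
    have h2 : (1/(x i:ℝ)) * L i ≤ (1/(x i:ℝ)) * ((x i:ℝ)/(a i) - 1) :=
      mul_le_mul_of_nonneg_left h1 (by positivity)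
    have h3 : (1/(x i:ℝ)) * ((x i:ℝ)/(a i) - 1) = 1/(a i:ℝ) - 1/(x i:ℝ) := by
      field_simp
    linarith
  -- strict at m
  have keym : (1/(x m:ℝ)) * L m < 1/(a m:ℝ) - 1/(x m:ℝ) := by
    have hx := hxR m hm; have ha := haR m hm
    have hne1 : (x m : ℝ)/(a m) ≠ 1 := by
      intro h
      apply hmne
      field_simp at h
      exact_mod_cast h
    have h1 : Real.log ((x m : ℝ)/(a m)) < (x m:ℝ)/(a m) - 1 :=
      Real.log_lt_sub_one_of_pos (div_pos hx ha) hne1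
    rw [Real.log_div (ne_of_gt hx) (ne_of_gt ha)] at h1
    have h2 : (1/(x m:ℝ)) * L m < (1/(x m:ℝ)) * ((x m:ℝ)/(a m) - 1) :=
      (mul_lt_mul_iff_right₀ (by positivity)).2 h1
    have h3 : (1/(x m:ℝ)) * ((x m:ℝ)/(a m) - 1) = 1/(a m:ℝ) - 1/(x m:ℝ) := by
      field_simp
    linarith
  -- partial sums of L are nonnegative
  have T : ∀ k, k ≤ v → 0 ≤ ∑ j ∈ Finset.range k, L j := by
    intro k hk
    rcases Nat.eq_zero_or_pos k with h0 | hkpos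
    · simp [h0]
    have hx0 : ∀ j ∈ Finset.range k, ((x j : ℝ)) ≠ 0 := by
      intro j hj
      exact ne_of_gt (hxR j (lt_of_lt_of_le (Finset.mem_range.1 hj) hk))
    have ha0 : ∀ j ∈ Finset.range k, ((a j : ℝ)) ≠ 0 := by
      intro j hj
      exact ne_of_gt (haR j (lt_of_lt_of_le (Finset.mem_range.1 hj) hk))
    have hsum : ∑ j ∈ Finset.range k, L j
        = Real.log (∏ j ∈ Finset.range k, (x j:ℝ))
          - Real.log (∏ j ∈ Finset.range k, (a j:ℝ)) := by
      rw [Real.log_prod hx0, Real.log_prod ha0, ← Finset.sum_sub_distrib]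
    rw [hsum, sub_nonneg]
    have hapos' : 0 < ∏ j ∈ Finset.range k, (a j:ℝ) := by
      apply Finset.prod_pos
      intro j hj
      exact haR j (lt_of_lt_of_le (Finset.mem_range.1 hj) hk)
    apply Real.log_le_log hapos'
    have hk' : k - 1 < v := by omega
    have := hprod (k-1) hk'
    rw [Nat.sub_add_cancel hkpos] at this
    push_cast
    exact_mod_cast this
  -- Abel summation: the weighted sum is nonnegative
  have habel : 0 ≤ ∑ i ∈ Finset.range v, (1/(x i:ℝ)) * L i := by
    have hb := Finset.sum_range_by_parts (fun i => 1/(x i:ℝ)) L v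
    simp only [smul_eq_mul] at hb
    rw [hb]
    have h1 : 0 ≤ (1/(x (v-1):ℝ)) * ∑ j ∈ Finset.range v, L j := by
      apply mul_nonneg
      · positivity
      · exact T v le_rfl
    have h2 : ∑ i ∈ Finset.range (v-1), (1/(x (i+1):ℝ) - 1/(x i:ℝ)) * ∑ j ∈ Finset.range (i+1), L j ≤ 0 := by
      apply Finset.sum_nonpos
      intro i hi
      have hi' := Finset.mem_range.1 hi
      have hiv : i + 1 < v := by omega
      apply mul_nonpos_of_nonpos_of_nonneg
      · have hxi := hxR i (by omega)
        have hxi1 := hxR (i+1) hiv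
        have hmono : (x i : ℝ) ≤ x (i+1) := by
          exact_mod_cast hxmono i (i+1) (by omega) hiv
        have : 1/(x (i+1):ℝ) ≤ 1/(x i:ℝ) := by
          apply one_div_le_one_div_of_le hxi hmono
        linarith
      · exact T (i+1) (by omega)
    linarith
  -- combine
  have hstrict : ∑ i ∈ Finset.range v, (1/(x i:ℝ)) * L i
      < ∑ i ∈ Finset.range v, (1/(a i:ℝ) - 1/(x i:ℝ)) := by
    apply Finset.sum_lt_sum
    · intro i hi
      exact key i (Finset.mem_range.1 hi)
    · exact ⟨m, Finset.mem_range.2 hm, keym⟩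
  rw [Finset.sum_sub_distrib] at hstrict
  linarith
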